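/- For every integer n ≥ 1, the map N : ℝ^{n+1} → ℂ^n × ℂ defined by N(x) = ((x_j + 2i·x_0·x_j)_{j=1}^n, ‖x‖² − i·x_0) is injective, its Fréchet derivative DN_x is injective at every x, and for all x, v, w ∈ ℝ^{n+1} one has ω(DN_x v, DN_x w) = 0, where ℂ^n × ℂ is identified with ℂ^{n+1} and ω is the standard symplectic form. Moreover the real part of the second-factor component of N(x) equals ‖x‖², so the level set {x : Re(pr₂(N(x))) = t} is empty for t < 0 and equals the sphere S^n_{√t} for t > 0, on which the first-factor component of N agrees with the Whitney sphere parameterization. (The Whitney sphere bounds an embedded Lagrangian disk in ℂ^{n+1}.) -/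

import Mathlib

open scoped BigOperators

/-- Standard symplectic form on `ℂ^N`: `ω(u, v) = Im (∑ conj (u j) * v j)`. -/
noncomputable def stdSymp (N : ℕ) (u v : Fin N → ℂ) : ℝ :=
  (∑ j, (starRingEnd ℂ) (u j) * v j).im

/-- Standard symplectic form on `ℂ^n × ℂ`, identified with `ℂ^{n+1}` coordinatewise. -/
noncomputable def sympPC (n : ℕ) (u v : (Fin n → ℂ) × ℂ) : ℝ :=
  stdSymp n u.1 v.1 + ((starRingEnd ℂ) u.2 * v.2).im

/-- The Whitney sphere parameterization `W : ℝ^{n+1} → ℂ^n`,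
`W(x)_j = x_j + 2i·x_0·x_j` for `1 ≤ j ≤ n`. -/
noncomputable def whitney (n : ℕ) (x : EuclideanSpace ℝ (Fin (n + 1))) : Fin n → ℂ :=
  fun j => (x j.succ : ℂ) + 2 * Complex.I * (x 0 : ℂ) * (x j.succ : ℂ)

/-- The null-cobordism of the Whitney sphere,
`N(x) = ((x_j + 2i·x_0·x_j)_{j=1}^n, ‖x‖² − i·x_0)`. -/
noncomputable def nullCob (n : ℕ) (x : EuclideanSpace ℝ (Fin (n + 1))) : (Fin n → ℂ) × ℂ :=
  (fun j => (x j.succ : ℂ) + 2 * Complex.I * (x 0 : ℂ) * (x j.succ : ℂ),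
   ((‖x‖ ^ 2 : ℝ) : ℂ) - Complex.I * (x 0 : ℂ))

lemma fderiv_nullCob (n : ℕ) (x v : EuclideanSpace ℝ (Fin (n + 1))) :
    fderiv ℝ (nullCob n) x v =
      (fun j : Fin n => (v j.succ : ℂ) + 2 * Complex.I * (x 0 : ℂ) * (v j.succ : ℂ)
          + 2 * Complex.I * (v 0 : ℂ) * (x j.succ : ℂ),
       ((2 * (inner ℝ x v : ℝ) : ℝ) : ℂ) - Complex.I * (v 0 : ℂ)) := by
  have hk : ∀ k : Fin (n + 1),
      HasFDerivAt (fun y : EuclideanSpace ℝ (Fin (n + 1)) => ((y k : ℝ) : ℂ))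
        (Complex.ofRealCLM.comp (EuclideanSpace.proj k)) x :=
    fun k => (Complex.ofRealCLM.comp (EuclideanSpace.proj k)).hasFDerivAt
  have h1 : HasFDerivAt
      (fun y : EuclideanSpace ℝ (Fin (n + 1)) => fun j : Fin n =>
        (y j.succ : ℂ) + 2 * Complex.I * (y 0 : ℂ) * (y j.succ : ℂ))
      (ContinuousLinearMap.pi fun j : Fin n =>
        (Complex.ofRealCLM.comp (EuclideanSpace.proj j.succ)) +
          ((2 * Complex.I * (x 0 : ℂ)) • (Complex.ofRealCLM.comp (EuclideanSpace.proj j.succ)) +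
            ((x j.succ : ℂ)) • ((2 * Complex.I) • (Complex.ofRealCLM.comp (EuclideanSpace.proj 0))))) x := by
    rw [hasFDerivAt_pi]
    intro j
    exact (hk j.succ).add (((hk 0).const_mul (2 * Complex.I)).mul (hk j.succ))
  have h2 : HasFDerivAt
      (fun y : EuclideanSpace ℝ (Fin (n + 1)) => ((‖y‖ ^ 2 : ℝ) : ℂ) - Complex.I * (y 0 : ℂ))
      ((Complex.ofRealCLM.comp (2 • (innerSL ℝ x))) -
        Complex.I • (Complex.ofRealCLM.comp (EuclideanSpace.proj 0))) x := by
    exact (Complex.ofRealCLM.hasFDerivAt.comp x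
      (hasStrictFDerivAt_norm_sq x).hasFDerivAt).sub ((hk 0).const_mul Complex.I)
  have H : HasFDerivAt (nullCob n) _ x := h1.prodMk h2
  rw [H.fderiv]
  refine Prod.ext ?_ ?_
  · funext j
    simp [Complex.ofReal_mul]
    ring
  · simp [Complex.ofReal_mul, two_smul, sub_eq_sub_iff_sub_eq_sub]
    ring

lemma inner_expand (n : ℕ) (a b : EuclideanSpace ℝ (Fin (n + 1))) :
    (inner ℝ a b : ℝ) = a 0 * b 0 + ∑ j : Fin n, a j.succ * b j.succ := by
  simp [PiLp.inner_apply, RCLike.inner_apply, Fin.sum_univ_succ, mul_comm]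

/-- The Whitney sphere bounds an embedded Lagrangian disk in `ℂ^{n+1}`: the map `N` is
injective, an immersion, and isotropic for the standard symplectic form; the real part of its
second component is `‖x‖²`, so its level set over `t` is empty for `t < 0` and is the sphere
`S^n_{√t}` for `t > 0`, on which the first component of `N` is the Whitney parameterization. -/
theorem stmt9 (n : ℕ) (hn : 1 ≤ n) :
    Function.Injective (nullCob n) ∧
    (∀ x : EuclideanSpace ℝ (Fin (n + 1)), Function.Injective (fderiv ℝ (nullCob n) x)) ∧
    (∀ x v w : EuclideanSpace ℝ (Fin (n + 1)),
      sympPC n (fderiv ℝ (nullCob n) x v) (fderiv ℝ (nullCob n) x w) = 0) ∧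
    (∀ x : EuclideanSpace ℝ (Fin (n + 1)), ((nullCob n x).2).re = ‖x‖ ^ 2) ∧
    (∀ t : ℝ, t < 0 →
      {x : EuclideanSpace ℝ (Fin (n + 1)) | ((nullCob n x).2).re = t} = ∅) ∧
    (∀ t : ℝ, 0 < t →
      {x : EuclideanSpace ℝ (Fin (n + 1)) | ((nullCob n x).2).re = t} =
        Metric.sphere 0 (Real.sqrt t)) ∧
    (∀ x : EuclideanSpace ℝ (Fin (n + 1)), (nullCob n x).1 = whitney n x) := by
  have hre : ∀ x : EuclideanSpace ℝ (Fin (n + 1)), ((nullCob n x).2).re = ‖x‖ ^ 2 := by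
    intro x; simp [nullCob, sq, Complex.mul_re]
  refine ⟨?_, ?_, ?_, hre, ?_, ?_, ?_⟩
  · -- injectivity
    intro x y h
    have h2 := congrArg Prod.snd h
    have h1 := congrArg Prod.fst h
    simp only [nullCob] at h1 h2
    have hx0 : x 0 = y 0 := by
      have := congrArg Complex.im h2
      simpa [sq] using this
    have hxs : ∀ j : Fin n, x j.succ = y j.succ := by
      intro j
      have := congrArg (fun f => Complex.re (f j)) h1
      simpa using this
    ext k
    refine Fin.cases hx0 (fun j => hxs j) k
  · -- injective derivative
    intro x v w h
    have key : ∀ u : EuclideanSpace ℝ (Fin (n + 1)),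
        fderiv ℝ (nullCob n) x u = 0 → u = 0 := by
      intro u hu
      rw [fderiv_nullCob] at hu
      have h2 := congrArg Prod.snd hu
      have h1 := congrArg Prod.fst hu
      simp only [Prod.snd_zero, Prod.fst_zero] at h1 h2
      have hu0 : u 0 = 0 := by
        have := congrArg Complex.im h2
        simpa using this
      have hus : ∀ j : Fin n, u j.succ = 0 := by
        intro j
        have := congrArg (fun f => Complex.re (f j)) h1
        simpa using this
      ext k
      refine Fin.cases hu0 (fun j => hus j) k
    have hsub : fderiv ℝ (nullCob n) x (v - w) = 0 := by
      rw [map_sub, h, sub_self]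
    have := key (v - w) hsub
    exact sub_eq_zero.mp this
  · -- isotropic
    intro x v w
    rw [fderiv_nullCob, fderiv_nullCob]
    simp only [sympPC, stdSymp, Complex.im_sum]
    have hterm : ∀ j : Fin n,
        ((starRingEnd ℂ) ((v j.succ : ℂ) + 2 * Complex.I * (x 0 : ℂ) * (v j.succ : ℂ)
            + 2 * Complex.I * (v 0 : ℂ) * (x j.succ : ℂ)) *
          ((w j.succ : ℂ) + 2 * Complex.I * (x 0 : ℂ) * (w j.succ : ℂ)
            + 2 * Complex.I * (w 0 : ℂ) * (x j.succ : ℂ))).im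
        = 2 * w 0 * (x j.succ * v j.succ) - 2 * v 0 * (x j.succ * w j.succ) := by
      intro j
      simp [Complex.ext_iff, Complex.mul_im, Complex.mul_re, Complex.add_im, Complex.add_re]
      ring
    rw [Finset.sum_congr rfl (fun j _ => hterm j)]
    have hc : (((starRingEnd ℂ) (((2 * (inner ℝ x v : ℝ) : ℝ) : ℂ) - Complex.I * (v 0 : ℂ))) *
        (((2 * (inner ℝ x w : ℝ) : ℝ) : ℂ) - Complex.I * (w 0 : ℂ))).im
        = -(2 * (inner ℝ x v : ℝ)) * w 0 + v 0 * (2 * (inner ℝ x w : ℝ)) := by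
      simp [Complex.ext_iff, Complex.mul_im, Complex.mul_re, Complex.sub_im, Complex.sub_re]
    rw [hc, inner_expand, inner_expand, Finset.sum_sub_distrib, ← Finset.mul_sum,
      ← Finset.mul_sum]
    ring
  · intro t ht
    ext x
    simp only [Set.mem_setOf_eq, Set.mem_empty_iff_false, iff_false]
    rw [hre]
    intro h
    exact absurd (h ▸ sq_nonneg ‖x‖) (not_le.mpr ht)
  · intro t ht
    ext x
    simp only [Set.mem_setOf_eq, Metric.mem_sphere, dist_zero_right]
    rw [hre]
    constructor
    · intro h; rw [← h, Real.sqrt_sq (norm_nonneg x)]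
    · intro h; rw [h, Real.sq_sqrt ht.le]
  · intro x; rfl
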